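/- For α ≠ 0 and all real β, γ, the pair (P^{αβγ}, h_α) with h_α(x) = (x₁² + x₂²)/(2α) is a Hamilton–Poisson realization of the Rabinovich system: P^{αβγ}(x)·∇h_α(x) = X(x) for all x ∈ ℝ³. -/

import Mathlib

open Matrix

/-- The Rabinovich vector field X(x₁,x₂,x₃) = (x₂x₃, −x₁x₃, x₁x₂). -/
def rabinovichField (x : Fin 3 → ℝ) : Fin 3 → ℝ :=
  ![x 1 * x 2, -(x 0 * x 2), x 0 * x 1]

/-- The gradient of a function on ℝ³. -/
noncomputable def grad (f : (Fin 3 → ℝ) → ℝ) (x : Fin 3 → ℝ) : Fin 3 → ℝ :=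
  fun j => fderiv ℝ f x (Pi.single j 1)

/-- The matrix field P^{αβγ}. -/
noncomputable def Pabc (α β γ : ℝ) (x : Fin 3 → ℝ) : Matrix (Fin 3) (Fin 3) ℝ :=
  !![0, α * x 2, -((α - β / 2 + γ / 2) * x 1);
     -(α * x 2), 0, -((β / 2 - γ / 2) * x 0);
     (α - β / 2 + γ / 2) * x 1, (β / 2 - γ / 2) * x 0, 0]

lemma grad_h (α : ℝ) (x : Fin 3 → ℝ) :
    grad (fun y => (y 0 ^ 2 + y 1 ^ 2) / (2 * α)) x
      = fun j => (if j = 0 then 2 * x 0 else if j = 1 then 2 * x 1 else 0) / (2 * α) := by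
  have h0 : HasFDerivAt (fun y : Fin 3 → ℝ => y 0)
      (ContinuousLinearMap.proj (R := ℝ) (φ := fun _ : Fin 3 => ℝ) 0) x :=
    (ContinuousLinearMap.proj (R := ℝ) (φ := fun _ : Fin 3 => ℝ) 0).hasFDerivAt
  have h1 : HasFDerivAt (fun y : Fin 3 → ℝ => y 1)
      (ContinuousLinearMap.proj (R := ℝ) (φ := fun _ : Fin 3 => ℝ) 1) x :=
    (ContinuousLinearMap.proj (R := ℝ) (φ := fun _ : Fin 3 => ℝ) 1).hasFDerivAt
  have h : HasFDerivAt (fun y : Fin 3 → ℝ => (y 0 ^ 2 + y 1 ^ 2) / (2 * α))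
      ((((2 * x 0) • (ContinuousLinearMap.proj (R := ℝ) (φ := fun _ : Fin 3 => ℝ) 0)
        + (2 * x 1) • (ContinuousLinearMap.proj (R := ℝ) (φ := fun _ : Fin 3 => ℝ) 1))).smulRight ((2*α)⁻¹ : ℝ)) x := by
    have h' := ((h0.mul h0).add (h1.mul h1)).const_mul ((2 * α)⁻¹)
    have heq : (fun y : Fin 3 → ℝ => (y 0 ^ 2 + y 1 ^ 2) / (2 * α))
        = fun y => (2 * α)⁻¹ * (y 0 * y 0 + y 1 * y 1) := by
      funext y; field_simp
    rw [heq]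
    refine h'.congr_fderiv ?_
    ext v
    simp [ContinuousLinearMap.smulRight_apply, pow_one, div_eq_mul_inv, add_mul]
    ring
  funext j
  rw [grad, h.fderiv]
  fin_cases j <;>
    simp [ContinuousLinearMap.smulRight_apply, Pi.single_apply, div_eq_mul_inv]

/-- For α ≠ 0, the pair (P^{αβγ}, h_α) with h_α(x) = (x₁² + x₂²)/(2α) is a
Hamilton–Poisson realization of the Rabinovich system. -/
theorem rabinovich_hamilton_poisson_Pabc (α β γ : ℝ) (hα : α ≠ 0) :
    ∀ x : Fin 3 → ℝ,
      (Pabc α β γ x).mulVec (grad (fun y => (y 0 ^ 2 + y 1 ^ 2) / (2 * α)) x) =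
        rabinovichField x := by
  intro x
  rw [grad_h]
  funext i
  fin_cases i <;>
    · simp [Pabc, rabinovichField, mulVec, dotProduct, Fin.sum_univ_three]
      field_simp
      all_goals ring
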